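/- Let (Ω, F, P) be a probability space, let k ≥ 1, and let X₀, X₁, …, X_k : Ω → ℝ be measurable random variables that are (jointly) independent. Then P(⋂_{i=1}^k {ω : X_i(ω) ≥ X₀(ω)}) ≥ ∏_{i=1}^k P({ω : X_i(ω) ≥ X₀(ω)}). -/

import Mathlib

open MeasureTheory ProbabilityTheory

lemma cheb_two (μ : Measure ℝ) [IsProbabilityMeasure μ] (f g : ℝ → ENNReal)
    (hf : Antitone f) (hg : Antitone g) :
    (∫⁻ x, f x ∂μ) * ∫⁻ x, g x ∂μ ≤ ∫⁻ x, f x * g x ∂μ := by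
  have hfm : Measurable f := hf.measurable
  have hgm : Measurable g := hg.measurable
  have key : ∀ x y, f x * g y + f y * g x ≤ f x * g x + f y * g y := by
    have main : ∀ x y, x ≤ y → f x * g y + f y * g x ≤ f x * g x + f y * g y := by
      intro x y hxy
      have h1 : f y ≤ f x := hf hxy
      have h2 : g y ≤ g x := hg hxy
      obtain ⟨a, ha⟩ : ∃ a, f x = f y + a := ⟨f x - f y, (add_tsub_cancel_of_le h1).symm⟩
      obtain ⟨b, hb⟩ : ∃ b, g x = g y + b := ⟨g x - g y, (add_tsub_cancel_of_le h2).symm⟩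
      rw [ha, hb]
      calc (f y + a) * g y + f y * (g y + b)
          ≤ ((f y + a) * g y + f y * (g y + b)) + a * b := le_self_add
        _ = (f y + a) * (g y + b) + f y * g y := by ring
    intro x y
    rcases le_total x y with h | h
    · exact main x y h
    · rw [add_comm (f x * g y), add_comm (f x * g x)]
      exact main y x h
  have h2 : 2 * ((∫⁻ x, f x ∂μ) * ∫⁻ x, g x ∂μ) ≤ 2 * ∫⁻ x, f x * g x ∂μ := by
    have L : ∫⁻ x, ∫⁻ y, (f x * g y + f y * g x) ∂μ ∂μ
        = 2 * ((∫⁻ x, f x ∂μ) * ∫⁻ x, g x ∂μ) := by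
      have inner : ∀ x, ∫⁻ y, (f x * g y + f y * g x) ∂μ
          = f x * (∫⁻ y, g y ∂μ) + (∫⁻ y, f y ∂μ) * g x := by
        intro x
        rw [lintegral_add_left (hgm.const_mul _), lintegral_const_mul _ hgm,
          lintegral_mul_const _ hfm]
      simp only [inner]
      rw [lintegral_add_left (hfm.mul_const _), lintegral_mul_const _ hfm,
        lintegral_const_mul _ hgm]
      ring
    have R : ∫⁻ x, ∫⁻ y, (f x * g x + f y * g y) ∂μ ∂μ
        = 2 * ∫⁻ x, f x * g x ∂μ := by
      have inner : ∀ x, ∫⁻ y, (f x * g x + f y * g y) ∂μ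
          = f x * g x + ∫⁻ y, f y * g y ∂μ := by
        intro x
        rw [lintegral_add_left measurable_const, lintegral_const, measure_univ, mul_one]
      simp only [inner]
      rw [lintegral_add_right _ measurable_const, lintegral_const, measure_univ, mul_one]
      ring
    rw [← L, ← R]
    exact lintegral_mono fun x => lintegral_mono fun y => key x y
  exact (ENNReal.mul_le_mul_iff_right (by norm_num) (by norm_num)).mp h2

lemma cheb_prod {ι : Type*} (μ : Measure ℝ) [IsProbabilityMeasure μ] (s : Finset ι)
    (g : ι → ℝ → ENNReal) (hg : ∀ i, Antitone (g i)) :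
    ∏ i ∈ s, ∫⁻ x, g i x ∂μ ≤ ∫⁻ x, ∏ i ∈ s, g i x ∂μ := by
  classical
  induction s using Finset.cons_induction with
  | empty => simp
  | cons a s ha ih =>
    have hprod : Antitone fun x => ∏ i ∈ s, g i x :=
      fun x y hxy => Finset.prod_le_prod' fun i _ => hg i hxy
    calc ∏ i ∈ Finset.cons a s ha, ∫⁻ x, g i x ∂μ
        = (∫⁻ x, g a x ∂μ) * ∏ i ∈ s, ∫⁻ x, g i x ∂μ := Finset.prod_cons _
      _ ≤ (∫⁻ x, g a x ∂μ) * ∫⁻ x, ∏ i ∈ s, g i x ∂μ := mul_le_mul_right ih _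
      _ ≤ ∫⁻ x, g a x * ∏ i ∈ s, g i x ∂μ := cheb_two μ _ _ (hg a) hprod
      _ = ∫⁻ x, ∏ i ∈ Finset.cons a s ha, g i x ∂μ := by
          simp only [Finset.prod_cons]

/-- **Positive correlation of the events `{X_i ≥ X₀}`** (Section 4). If `X₀, X₁, …, X_k` are
jointly independent real random variables on a probability space `(Ω, F, P)`, then
`P(⋂_{i=1}^k {X_i ≥ X₀}) ≥ ∏_{i=1}^k P(X_i ≥ X₀)`. -/
theorem stmt_11 {Ω : Type*} [MeasurableSpace Ω] (P : Measure Ω)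
    [IsProbabilityMeasure P] (k : ℕ) (hk : 1 ≤ k)
    (X : Fin (k + 1) → Ω → ℝ) (hmeas : ∀ i, Measurable (X i))
    (hindep : iIndepFun X P) :
    ∏ i : Fin k, P {ω | X 0 ω ≤ X i.succ ω} ≤
      P (⋂ i : Fin k, {ω | X 0 ω ≤ X i.succ ω}) := by
  classical
  set μ₀ : Measure ℝ := P.map (X 0) with hμ₀
  haveI : IsProbabilityMeasure μ₀ := Measure.isProbabilityMeasure_map (hmeas 0).aemeasurable
  set g : Fin k → ℝ → ENNReal := fun i t => P (X i.succ ⁻¹' Set.Ici t) with hg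
  have hganti : ∀ i, Antitone (g i) := fun i t t' htt' =>
    measure_mono (Set.preimage_mono (Set.Ici_subset_Ici.mpr htt'))
  -- product formula for the slice events
  have hslice : ∀ t : ℝ, P (⋂ i : Fin k, X i.succ ⁻¹' Set.Ici t) = ∏ i : Fin k, g i t := by
    intro t
    set B : Fin (k + 1) → Set ℝ := fun j => if j = 0 then Set.univ else Set.Ici t with hB
    have hBm : ∀ j, MeasurableSet (B j) := by
      intro j; by_cases h : j = 0 <;> simp [hB, h, measurableSet_Ici]
    have := hindep.meas_iInter (s := fun j => X j ⁻¹' B j)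
      (fun j => ⟨B j, hBm j, rfl⟩)
    have hInter : (⋂ j, X j ⁻¹' B j) = ⋂ i : Fin k, X i.succ ⁻¹' Set.Ici t := by
      ext ω
      simp only [Set.mem_iInter, Set.mem_preimage, Fin.forall_fin_succ, hB]
      simp [Fin.succ_ne_zero]
    rw [hInter] at this
    rw [this, Fin.prod_univ_succ]
    simp [hB, Fin.succ_ne_zero, hg]
  -- the vector of the other variables
  set W : Ω → (Fin k → ℝ) := fun ω i => X i.succ ω with hW
  have hWm : Measurable W := measurable_pi_lambda _ fun i => hmeas i.succ
  -- independence of X 0 and W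
  have hXW : IndepFun (X 0) W P := by
    have h := hindep.indepFun_finset {0} {0}ᶜ (by simp) hmeas
    have h2 := h.comp (_mγ := Real.measurableSpace) (_mγ' := MeasurableSpace.pi) (φ := fun y : ((i : ({0} : Finset (Fin (k+1)))) → ℝ) => y ⟨0, by simp⟩)
      (ψ := fun (y : (i : ({0}ᶜ : Finset (Fin (k+1)))) → ℝ) (i : Fin k) =>
        y ⟨i.succ, by simp [Fin.succ_ne_zero]⟩)
      (measurable_pi_apply _) (measurable_pi_lambda _ fun i => measurable_pi_apply _)
    exact h2
  have hmap : P.map (fun ω => (X 0 ω, W ω)) = μ₀.prod (P.map W) :=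
    (indepFun_iff_map_prod_eq_prod_map_map (hmeas 0).aemeasurable hWm.aemeasurable).1 hXW
  set S : Set (ℝ × (Fin k → ℝ)) := ⋂ i : Fin k, {p | p.1 ≤ p.2 i} with hS
  have hSm : MeasurableSet S := MeasurableSet.iInter fun i =>
    measurableSet_le measurable_fst ((measurable_pi_apply i).comp measurable_snd)
  have hA : P (⋂ i : Fin k, {ω | X 0 ω ≤ X i.succ ω}) = ∫⁻ t, ∏ i : Fin k, g i t ∂μ₀ := by
    have hpre : (⋂ i : Fin k, {ω | X 0 ω ≤ X i.succ ω}) = (fun ω => (X 0 ω, W ω)) ⁻¹' S := by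
      ext ω; simp [hS, hW]
    rw [hpre, ← Measure.map_apply ((hmeas 0).prodMk hWm) hSm, hmap, Measure.prod_apply hSm]
    refine lintegral_congr fun t => ?_
    have h1 : Prod.mk t ⁻¹' S = ⋂ i : Fin k, (fun y : Fin k → ℝ => y i) ⁻¹' Set.Ici t := by
      ext y; simp [hS]
    rw [h1, Measure.map_apply hWm (MeasurableSet.iInter fun i =>
      (measurable_pi_apply i) measurableSet_Ici)]
    have h2 : W ⁻¹' (⋂ i : Fin k, (fun y : Fin k → ℝ => y i) ⁻¹' Set.Ici t)
        = ⋂ i : Fin k, X i.succ ⁻¹' Set.Ici t := by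
      ext ω; simp [hW]
    rw [h2, hslice t]
  have hC : ∀ i : Fin k, P {ω | X 0 ω ≤ X i.succ ω} = ∫⁻ t, g i t ∂μ₀ := by
    intro i
    have hXi : IndepFun (X 0) (X i.succ) P := hindep.indepFun (Fin.succ_ne_zero i).symm
    have hmap2 : P.map (fun ω => (X 0 ω, X i.succ ω)) = μ₀.prod (P.map (X i.succ)) :=
      (indepFun_iff_map_prod_eq_prod_map_map (hmeas 0).aemeasurable
        (hmeas i.succ).aemeasurable).1 hXi
    have hTm : MeasurableSet {p : ℝ × ℝ | p.1 ≤ p.2} :=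
      measurableSet_le measurable_fst measurable_snd
    have hpre : {ω | X 0 ω ≤ X i.succ ω}
        = (fun ω => (X 0 ω, X i.succ ω)) ⁻¹' {p : ℝ × ℝ | p.1 ≤ p.2} := rfl
    rw [hpre, ← Measure.map_apply ((hmeas 0).prodMk (hmeas i.succ)) hTm, hmap2,
      Measure.prod_apply hTm]
    refine lintegral_congr fun t => ?_
    have h1 : Prod.mk t ⁻¹' {p : ℝ × ℝ | p.1 ≤ p.2} = Set.Ici t := rfl
    rw [h1, Measure.map_apply (hmeas i.succ) measurableSet_Ici]
  calc ∏ i : Fin k, P {ω | X 0 ω ≤ X i.succ ω}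
      = ∏ i : Fin k, ∫⁻ t, g i t ∂μ₀ := Finset.prod_congr rfl fun i _ => hC i
    _ ≤ ∫⁻ t, ∏ i : Fin k, g i t ∂μ₀ := cheb_prod μ₀ Finset.univ g hganti
    _ = P (⋂ i : Fin k, {ω | X 0 ω ≤ X i.succ ω}) := hA.symm
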